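/- For every positive integer n, (2n+1) · B_{2n} = ∑_{0 ≤ j ≤ i ≤ n} C(2n+1, 2i-2j+1) · B_{2n-2i+2j} · (2^{1-2i+2j} - 2^{2-2n}). -/

import Mathlib

open Nat Finset PowerSeries

private lemma key_ps : rescale (2 : ℚ) (bernoulliPowerSeries ℚ) * (exp ℚ + 1)
      = C (2:ℚ) * bernoulliPowerSeries ℚ := by
  have hB := bernoulliPowerSeries_mul_exp_sub_one ℚ
  have hne : (exp ℚ - 1 : ℚ⟦X⟧) ≠ 0 := by
    intro h
    have := congrArg (coeff 1) h
    simp [coeff_exp] at this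
  apply mul_right_cancel₀ hne
  calc rescale (2:ℚ) (bernoulliPowerSeries ℚ) * (exp ℚ + 1) * (exp ℚ - 1)
      = rescale 2 (bernoulliPowerSeries ℚ) * (exp ℚ ^ 2 - 1) := by ring
    _ = rescale 2 (bernoulliPowerSeries ℚ) * (rescale 2 (exp ℚ) - 1) := by
        have h2 := exp_pow_eq_rescale_exp (A := ℚ) 2
        norm_num at h2
        rw [← h2]
    _ = rescale 2 (bernoulliPowerSeries ℚ * (exp ℚ - 1)) := by
        rw [map_mul, map_sub, map_one]
    _ = C (2:ℚ) * X := by rw [hB]; exact rescale_X 2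
    _ = C (2:ℚ) * (bernoulliPowerSeries ℚ * (exp ℚ - 1)) := by rw [hB]
    _ = C (2:ℚ) * bernoulliPowerSeries ℚ * (exp ℚ - 1) := by ring

private lemma L1 (n : ℕ) :
    ∑ k ∈ range (n + 1), (n.choose k : ℚ) * 2 ^ k * bernoulli k
      = (2 - 2 ^ n) * bernoulli n := by
  have hfac : ∀ m : ℕ, (m ! : ℚ) ≠ 0 := fun m => Nat.cast_ne_zero.mpr m.factorial_ne_zero
  have hc := congrArg (coeff n) key_ps
  rw [coeff_mul, coeff_C_mul, Finset.Nat.sum_antidiagonal_eq_sum_range_succ_mk] at hc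
  simp only [bernoulliPowerSeries, coeff_rescale, coeff_mk, map_add, coeff_exp, coeff_one,
    Algebra.algebraMap_self, RingHom.id_apply, mul_add] at hc
  rw [sum_add_distrib] at hc
  have h2 : ∑ x ∈ range n.succ, (2:ℚ) ^ x * (bernoulli x / x !) * (if n - x = 0 then (1:ℚ) else 0)
      = 2 ^ n * (bernoulli n / n !) := by
    rw [Finset.sum_eq_single_of_mem n (self_mem_range_succ n)]
    · simp
    · intro b hb hbn
      have : n - b ≠ 0 := by
        have := mem_range_succ_iff.mp hb
        omega
      simp [this]
  rw [h2] at hc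
  have h1 : ∑ x ∈ range n.succ, (2:ℚ) ^ x * (bernoulli x / x !) * (1 / (n - x)!)
      = (2 - 2 ^ n) * (bernoulli n / n !) := by linarith [hc]
  calc ∑ k ∈ range (n + 1), (n.choose k : ℚ) * 2 ^ k * bernoulli k
      = (n ! : ℚ) * ∑ x ∈ range n.succ, (2:ℚ) ^ x * (bernoulli x / x !) * (1 / (n - x)!) := by
        rw [mul_sum]
        refine sum_congr rfl fun k hk => ?_
        rw [Nat.cast_choose ℚ (mem_range_succ_iff.mp hk)]
        field_simp
    _ = (2 - 2 ^ n) * bernoulli n := by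
        rw [h1]
        field_simp

private lemma bodd {m : ℕ} (h1 : 1 < m) (ho : Odd m) : bernoulli m = 0 := by
  rw [bernoulli_eq_bernoulli'_of_ne_one (by omega), bernoulli'_eq_zero_of_odd ho h1]

private lemma sum_c (N : ℕ) (h : N ≠ 1) :
    ∑ k ∈ range (N+1), (N.choose k : ℚ) * (2^k - 2) * bernoulli k = -(2^N) * bernoulli N := by
  have h1 := L1 N
  have h2 : ∑ k ∈ range (N+1), (N.choose k : ℚ) * bernoulli k = bernoulli N := by
    rw [sum_range_succ, sum_bernoulli, if_neg h]
    simp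
  calc ∑ k ∈ range (N+1), (N.choose k : ℚ) * (2^k - 2) * bernoulli k
      = ∑ k ∈ range (N+1), ((N.choose k : ℚ) * 2 ^ k * bernoulli k
          - 2 * ((N.choose k:ℚ) * bernoulli k)) := sum_congr rfl fun k _ => by ring
    _ = _ := by rw [sum_sub_distrib, h1, ← mul_sum, h2]; ring

private lemma sum_kc (n : ℕ) (hn : 0 < n) :
    ∑ k ∈ range (2*n+2), (k:ℚ) * ((2*n+1).choose k) * (2^k - 2) * bernoulli k
      = (2*n+1) * 2^(2*n) * bernoulli (2*n) := by
  have key : ∀ k, k ≤ 2*n+1 → (k:ℚ) * ((2*n+1).choose k) =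
      (2*n+1) * (((2*n+1).choose k : ℚ) - ((2*n).choose k)) := by
    intro k hk
    cases k with
    | zero => simp
    | succ j =>
      have he1 : (2*(n:ℚ)+1) * ((2*n).choose j : ℚ)
          = ((2*n+1).choose (j+1) : ℚ) * ((j:ℚ)+1) := by
        exact_mod_cast congrArg (Nat.cast : ℕ → ℚ) (Nat.add_one_mul_choose_eq (2*n) j)
      have he2 : ((2*n+1).choose (j+1) : ℚ)
          = ((2*n).choose j : ℚ) + ((2*n).choose (j+1) : ℚ) := by
        exact_mod_cast congrArg (Nat.cast : ℕ → ℚ) (Nat.choose_succ_succ (2*n) j)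
      push_cast
      linear_combination -he1 - (2*(n:ℚ)+1) * he2
  calc ∑ k ∈ range (2*n+2), (k:ℚ) * ((2*n+1).choose k) * (2^k - 2) * bernoulli k
      = ∑ k ∈ range (2*n+2), ((2*n+1) * (((2*n+1).choose k : ℚ) * (2^k-2) * bernoulli k)
          - (2*n+1) * (((2*n).choose k : ℚ) * (2^k-2) * bernoulli k)) := by
        refine sum_congr rfl fun k hk => ?_
        have hk' := mem_range.mp hk
        have h := key k (by omega)
        linear_combination ((2:ℚ)^k - 2) * bernoulli k * h
    _ = (2*n+1) * (∑ k ∈ range (2*n+2), ((2*n+1).choose k : ℚ) * (2^k-2) * bernoulli k)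
        - (2*n+1) * (∑ k ∈ range (2*n+2), ((2*n).choose k : ℚ) * (2^k-2) * bernoulli k) := by
        rw [sum_sub_distrib, mul_sum, mul_sum]
    _ = (2*n+1) * 2^(2*n) * bernoulli (2*n) := by
        have hA : ∑ k ∈ range (2*n+2), ((2*n+1).choose k : ℚ) * (2^k-2) * bernoulli k = 0 := by
          rw [sum_c (2*n+1) (by omega), bodd (by omega) ⟨n, by ring⟩, mul_zero]
        have hB : ∑ k ∈ range (2*n+2), ((2*n).choose k : ℚ) * (2^k-2) * bernoulli k
            = -(2^(2*n)) * bernoulli (2*n) := by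
          rw [sum_range_succ, Nat.choose_eq_zero_of_lt (by omega)]
          rw [sum_c (2*n) (by omega)]
          simp
        rw [hA, hB]
        ring

private lemma pair_sum (N : ℕ) (f : ℕ → ℚ) :
    ∑ k ∈ range (2*N), f k = ∑ m ∈ range N, (f (2*m) + f (2*m+1)) := by
  induction N with
  | zero => simp
  | succ N ih =>
    have e : 2*(N+1) = (2*N)+1+1 := by ring
    rw [e, sum_range_succ, sum_range_succ, ih, sum_range_succ]
    ring

private lemma tri (N : ℕ) (g : ℕ → ℚ) :
    ∑ i ∈ range N, ∑ k ∈ range (i+1), g k = ∑ k ∈ range N, ((N:ℚ) - k) * g k := by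
  induction N with
  | zero => simp
  | succ N ih =>
    rw [sum_range_succ, ih]
    conv_rhs => rw [sum_range_succ]
    rw [sum_range_succ g N]
    have hsum : ∑ x ∈ range N, (((N+1:ℕ):ℚ) - x) * g x
        = ∑ x ∈ range N, (((N:ℚ) - x) * g x + g x) := by
      refine sum_congr rfl fun x _ => ?_
      push_cast
      ring
    rw [hsum, sum_add_distrib]
    push_cast
    ring


theorem bernoulli_double_sum (n : ℕ) (hn : 0 < n) :
    (2 * n + 1 : ℚ) * bernoulli (2 * n) =
      ∑ i ∈ Finset.range (n + 1), ∑ j ∈ Finset.range (i + 1),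
        ((Nat.choose (2 * n + 1) (2 * i - 2 * j + 1) : ℚ)) *
          bernoulli (2 * n - 2 * i + 2 * j) *
          ((2 : ℚ) ^ ((1 : ℤ) - 2 * i + 2 * j) - (2 : ℚ) ^ ((2 : ℤ) - 2 * n)) := by
  have h2 : (2:ℚ) ≠ 0 := two_ne_zero
  set G : ℕ → ℚ := fun k => (((2*n+1).choose (2*k+1) : ℚ)) * bernoulli (2*n - 2*k) *
      ((2:ℚ)^((1:ℤ) - 2*k) - (2:ℚ)^((2:ℤ) - 2*n)) with hG
  -- even-part sum
  have hEven : ∑ m ∈ range (n+1),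
        ((m:ℚ)+1) * (((2*n+1).choose (2*m) : ℚ) * (2^(2*m) - 2) * bernoulli (2*m))
      = (2*(n:ℚ)+1) * 2^(2*n) * bernoulli (2*n) / 2 := by
    have codd : ∀ m : ℕ,
        ((2*n+1).choose (2*m+1) : ℚ) * (2^(2*m+1) - 2) * bernoulli (2*m+1) = 0 := by
      intro m
      cases m with
      | zero => norm_num
      | succ j => rw [bodd (by omega) (odd_two_mul_add_one _), mul_zero]
    have hsumc : ∑ k ∈ range (2*n+2), ((2*n+1).choose k : ℚ) * (2^k - 2) * bernoulli k = 0 := by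
      rw [sum_c (2*n+1) (by omega), bodd (by omega) (odd_two_mul_add_one n), mul_zero]
    have hp := pair_sum (n+1)
      (fun k => ((k:ℚ)/2+1) * (((2*n+1).choose k : ℚ) * (2^k - 2) * bernoulli k))
    rw [show 2*(n+1) = 2*n+2 by ring] at hp
    calc ∑ m ∈ range (n+1),
          ((m:ℚ)+1) * (((2*n+1).choose (2*m) : ℚ) * (2^(2*m) - 2) * bernoulli (2*m))
        = ∑ k ∈ range (2*n+2), ((k:ℚ)/2+1) * (((2*n+1).choose k : ℚ) * (2^k - 2) * bernoulli k) := by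
          rw [hp]
          refine sum_congr rfl fun m _ => ?_
          rw [codd m]
          push_cast
          ring
      _ = (1/2) * ∑ k ∈ range (2*n+2), (k:ℚ) * ((2*n+1).choose k) * (2^k - 2) * bernoulli k
          + ∑ k ∈ range (2*n+2), ((2*n+1).choose k : ℚ) * (2^k - 2) * bernoulli k := by
          rw [mul_sum, ← sum_add_distrib]
          refine sum_congr rfl fun k _ => by ring
      _ = (2*(n:ℚ)+1) * 2^(2*n) * bernoulli (2*n) / 2 := by
          rw [sum_kc n hn, hsumc]
          push_cast
          ring
  symm
  calc ∑ i ∈ Finset.range (n + 1), ∑ j ∈ Finset.range (i + 1),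
        ((Nat.choose (2 * n + 1) (2 * i - 2 * j + 1) : ℚ)) *
          bernoulli (2 * n - 2 * i + 2 * j) *
          ((2 : ℚ) ^ ((1 : ℤ) - 2 * i + 2 * j) - (2 : ℚ) ^ ((2 : ℤ) - 2 * n))
      = ∑ i ∈ range (n+1), ∑ j ∈ range (i+1), G (i - j) := by
        refine sum_congr rfl fun i hi => sum_congr rfl fun j hj => ?_
        have hji : j ≤ i := mem_range_succ_iff.mp hj
        have hi' : i ≤ n := mem_range_succ_iff.mp hi
        simp only [hG]
        have e1 : 2*(i-j)+1 = 2*i - 2*j + 1 := by omega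
        have e2 : 2*n - 2*(i-j) = 2*n - 2*i + 2*j := by omega
        have e3 : (1:ℤ) - 2*((i-j:ℕ):ℤ) = (1:ℤ) - 2*(i:ℤ) + 2*(j:ℤ) := by omega
        rw [e1, e2, e3]
    _ = ∑ i ∈ range (n+1), ∑ k ∈ range (i+1), G k := by
        refine sum_congr rfl fun i hi => ?_
        rw [← sum_range_reflect]
        refine sum_congr rfl fun x hx => ?_
        have hx' : x ≤ i := mem_range_succ_iff.mp hx
        congr 1
        omega
    _ = ∑ k ∈ range (n+1), (((n+1:ℕ):ℚ) - (k:ℚ)) * G k := tri (n+1) G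
    _ = ∑ m ∈ range (n+1), ((((n+1:ℕ)):ℚ) - ((n + 1 - 1 - m : ℕ):ℚ)) * G (n + 1 - 1 - m) :=
        (Finset.sum_range_reflect (fun k => (((n+1:ℕ):ℚ) - (k:ℚ)) * G k) (n+1)).symm
    _ = ∑ m ∈ range (n+1),
          ((m:ℚ)+1) * (((2*n+1).choose (2*m) : ℚ) * (2^(2*m) - 2) * bernoulli (2*m))
            * (2:ℚ)^((1:ℤ) - 2*(n:ℤ)) := by
        refine sum_congr rfl fun m hm' => ?_
        have hm : m ≤ n := mem_range_succ_iff.mp hm'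
        have e0 : n + 1 - 1 - m = n - m := by omega
        rw [e0]
        simp only [hG]
        have ec : 2*(n-m)+1 = (2*n+1) - 2*m := by omega
        rw [ec, Nat.choose_symm (by omega : 2*m ≤ 2*n+1)]
        have eb : 2*n - 2*(n-m) = 2*m := by omega
        rw [eb]
        have ecoef : ((n+1:ℕ):ℚ) - ((n-m:ℕ):ℚ) = (m:ℚ)+1 := by
          rw [Nat.cast_sub hm]
          push_cast
          ring
        rw [ecoef]
        have hz : ((n-m:ℕ):ℤ) = (n:ℤ) - m := by omega
        have hzz : (2:ℚ)^((1:ℤ) - 2*((n-m:ℕ):ℤ)) - (2:ℚ)^((2:ℤ) - 2*n)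
            = ((2:ℚ)^(2*m) - 2) * (2:ℚ)^((1:ℤ) - 2*(n:ℤ)) := by
          rw [hz]
          have hA : (1:ℤ) - 2*((n:ℤ)-m) = ((2*m : ℕ) : ℤ) + (1 - 2*(n:ℤ)) := by push_cast; ring
          have hB : (2:ℤ) - 2*(n:ℤ) = 1 + (1 - 2*(n:ℤ)) := by ring
          rw [hA, hB, zpow_add₀ h2, zpow_add₀ h2, zpow_natCast, zpow_one]
          ring
        rw [hzz]
        ring
    _ = (2 * (n:ℚ) + 1) * bernoulli (2 * n) := by
        rw [← sum_mul, hEven]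
        have hpow : (2:ℚ)^(2*n) * (2:ℚ)^((1:ℤ) - 2*(n:ℤ)) = 2 := by
          rw [← zpow_natCast (2:ℚ) (2*n), ← zpow_add₀ h2]
          norm_num
        calc (2*(n:ℚ)+1) * 2^(2*n) * bernoulli (2*n) / 2 * (2:ℚ)^((1:ℤ) - 2*(n:ℤ))
            = (2*(n:ℚ)+1) * bernoulli (2*n) / 2 * ((2:ℚ)^(2*n) * (2:ℚ)^((1:ℤ) - 2*(n:ℤ))) := by
              ring
          _ = (2 * (n:ℚ) + 1) * bernoulli (2 * n) := by rw [hpow]; ring
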